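/- Fix integers n, l ≥ 1 and real matrices E ∈ ℝ^{n×n}, G ∈ ℝ^{n×l}, and let a = (a_0, …, a_{n−1}) ∈ ℝ^{1×n} be a row vector satisfying E^n = a_0 I_n + a_1 E + ⋯ + a_{n−1} E^{n−1}. Let T ∈ ℝ^{n×n} be the unit lower-triangular Toeplitz matrix with T_{ii} = 1, T_{ij} = −a_{n−i+j} for i > j (1-indexed), and T_{ij} = 0 for i < j. Then F_y − (a ⊗ I_n) M̃_y = F_y · (T ⊗ I_l), and consequently rank(F_y − (a ⊗ I_n) M̃_y) = rank(F_y). In particular, if rank(F_y) = n then F_y − (a ⊗ I_n) M̃_y has full row rank n. (Key rank identity in the proof of Theorem 3.) -/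
import Mathlib


open Matrix

noncomputable section

namespace LQGPaper

variable {n m l : ℕ}

/-- Row block matrix `(E^{n-1}B, E^{n-2}B, …, B) ∈ ℝ^{n×nk}`. -/
def Frow {k : ℕ} (E : Matrix (Fin n) (Fin n) ℝ) (B : Matrix (Fin n) (Fin k) ℝ) :
    Matrix (Fin n) (Fin n × Fin k) ℝ :=
  Matrix.of fun i q => (E ^ (n - 1 - (q.1 : ℕ)) * B) i q.2

/-- Strictly block-lower-triangular matrix (`M̃_u`/`M̃_y` style) whose `(i,j)` block
(0-indexed, blocks of size `n × k`) is `E^{i-j-1} B` for `i > j` and `0` otherwise. -/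
def Mlow {k : ℕ} (E : Matrix (Fin n) (Fin n) ℝ) (B : Matrix (Fin n) (Fin k) ℝ) :
    Matrix (Fin n × Fin n) (Fin n × Fin k) ℝ :=
  Matrix.of fun p q =>
    if (q.1 : ℕ) < (p.1 : ℕ) then (E ^ ((p.1 : ℕ) - (q.1 : ℕ) - 1) * B) p.2 q.2 else 0

/-- Strictly block-lower-triangular matrix (`M_u`/`M_y` style) whose `(i,j)` block
(0-indexed, blocks of size `m × k`) is `H E^{i-j-1} B` for `i > j` and `0` otherwise. -/
def MlowH {k : ℕ} (E : Matrix (Fin n) (Fin n) ℝ) (B : Matrix (Fin n) (Fin k) ℝ)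
    (H : Matrix (Fin m) (Fin n) ℝ) :
    Matrix (Fin n × Fin m) (Fin n × Fin k) ℝ :=
  Matrix.of fun p q =>
    if (q.1 : ℕ) < (p.1 : ℕ) then (H * E ^ ((p.1 : ℕ) - (q.1 : ℕ) - 1) * B) p.2 q.2 else 0

/-- The block column `F_x = (H; HE; …; HE^{n-1}) ∈ ℝ^{mn×n}`. -/
def Fx (E : Matrix (Fin n) (Fin n) ℝ) (H : Matrix (Fin m) (Fin n) ℝ) :
    Matrix (Fin n × Fin m) (Fin n) ℝ :=
  Matrix.of fun p j => (H * E ^ (p.1 : ℕ)) p.2 j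

/-- The selection matrix `P_i = I_n ⊗ e_iᵀ ∈ ℝ^{n×nm}`. -/
def Pmat (n : ℕ) {m : ℕ} (i : Fin m) : Matrix (Fin n) (Fin n × Fin m) ℝ :=
  Matrix.of fun r q => if r = q.1 ∧ q.2 = i then 1 else 0

/-- The Kronecker product `a ⊗ I_q ∈ ℝ^{q×nq}` of a row vector `a ∈ ℝ^{1×n}`
with the identity `I_q`. -/
def aKron (a : Fin n → ℝ) (q : ℕ) : Matrix (Fin q) (Fin n × Fin q) ℝ :=
  Matrix.of fun i p => if i = p.2 then a p.1 else 0

/-- The row vector `a ∈ ℝ^{1×n}` as a `1 × n` matrix. -/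
def aRow (a : Fin n → ℝ) : Matrix (Fin 1) (Fin n) ℝ := Matrix.of fun _ k => a k

/-- The `i`-th row of `H` as a `1 × n` matrix. -/
def Hrow (H : Matrix (Fin m) (Fin n) ℝ) (i : Fin m) : Matrix (Fin 1) (Fin n) ℝ :=
  Matrix.of fun _ j => H i j

/-- The estimation matrix
`L_est = [[F_u − (a⊗I_n)M̃_u , F_y − (a⊗I_n)M̃_y]; [a⊗I_m , 0]] ∈ ℝ^{(n+m)×(m+l)n}`. -/
def Lest (E : Matrix (Fin n) (Fin n) ℝ) (F : Matrix (Fin n) (Fin m) ℝ)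
    (G : Matrix (Fin n) (Fin l) ℝ) (a : Fin n → ℝ) :
    Matrix (Fin n ⊕ Fin m) ((Fin n × Fin m) ⊕ (Fin n × Fin l)) ℝ :=
  Matrix.fromBlocks (Frow E F - aKron a n * Mlow E F) (Frow E G - aKron a n * Mlow E G)
    (aKron a m) 0

/-- A compensator trajectory: `x̂(t+1) = E x̂(t) + F u(t) + G y(t+1)`, `u(t) = H x̂(t)`. -/
def IsCompTraj (E : Matrix (Fin n) (Fin n) ℝ) (F : Matrix (Fin n) (Fin m) ℝ)
    (G : Matrix (Fin n) (Fin l) ℝ) (H : Matrix (Fin m) (Fin n) ℝ)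
    (xh : ℕ → Fin n → ℝ) (u : ℕ → Fin m → ℝ) (y : ℕ → Fin l → ℝ) : Prop :=
  (∀ t, xh (t + 1) = E.mulVec (xh t) + F.mulVec (u t) + G.mulVec (y (t + 1))) ∧
    ∀ t, u t = H.mulVec (xh t)

/-- The stacked vector `(v(t); v(t+1); …; v(t+r-1))`. -/
def stack {k : ℕ} (v : ℕ → Fin k → ℝ) (r t : ℕ) : Fin r × Fin k → ℝ :=
  fun p => v (t + (p.1 : ℕ)) p.2

/-- The unit lower-triangular Toeplitz matrix `T` with `T_{ii} = 1` and
`T_{ij} = −a_{n−i+j}` for `i > j` (1-indexed). -/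
def Tmat {n : ℕ} (a : Fin n → ℝ) : Matrix (Fin n) (Fin n) ℝ :=
  Matrix.of fun i j =>
    if i = j then 1
    else if h : (j : ℕ) < (i : ℕ) then
      -a ⟨n - ((i : ℕ) - (j : ℕ)), by have hi := i.isLt; omega⟩
    else 0

/-- The Kronecker product `T ⊗ I_l ∈ ℝ^{ln×ln}`. -/
def kronI {n : ℕ} (T : Matrix (Fin n) (Fin n) ℝ) (l : ℕ) :
    Matrix (Fin n × Fin l) (Fin n × Fin l) ℝ :=
  Matrix.of fun p q => if p.2 = q.2 then T p.1 q.1 else 0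

/-- key rank identity in the proof of Theorem 3. -/
theorem rank_identity (n l : ℕ) (hn : 1 ≤ n) (hl : 1 ≤ l)
    (E : Matrix (Fin n) (Fin n) ℝ) (G : Matrix (Fin n) (Fin l) ℝ)
    (a : Fin n → ℝ) (ha : E ^ n = ∑ k : Fin n, a k • E ^ (k : ℕ)) :
    Frow E G - aKron a n * Mlow E G = Frow E G * kronI (Tmat a) l ∧
    (Frow E G - aKron a n * Mlow E G).rank = (Frow E G).rank ∧
    ((Frow E G).rank = n → (Frow E G - aKron a n * Mlow E G).rank = n) := by
  have key : Frow E G - aKron a n * Mlow E G = Frow E G * kronI (Tmat a) l := by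
    ext i q
    obtain ⟨j, s⟩ := q
    have hprod : (aKron a n * Mlow E G) i (j, s)
        = ∑ p1 : Fin n, if (j : ℕ) < (p1 : ℕ) then
            a p1 * (E ^ ((p1 : ℕ) - (j : ℕ) - 1) * G) i s else 0 := by
      rw [Matrix.mul_apply, Fintype.sum_prod_type]
      refine Finset.sum_congr rfl fun p1 _ => ?_
      by_cases h : (j : ℕ) < (p1 : ℕ)
      · simp only [aKron, Mlow, of_apply, if_pos h, ite_mul, zero_mul,
          Finset.sum_ite_eq, Finset.mem_univ, if_true]
      · simp only [aKron, Mlow, of_apply, if_neg h, mul_zero, Finset.sum_const_zero]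
    have hright : (Frow E G * kronI (Tmat a) l) i (j, s)
        = ∑ q1 : Fin n, (E ^ (n - 1 - (q1 : ℕ)) * G) i s * Tmat a q1 j := by
      rw [Matrix.mul_apply, Fintype.sum_prod_type]
      refine Finset.sum_congr rfl fun q1 _ => ?_
      simp only [kronI, of_apply, mul_ite, mul_zero, Finset.sum_ite_eq', Finset.mem_univ,
        if_true, Frow]
    have hsplit : ∀ q1 : Fin n,
        (E ^ (n - 1 - (q1 : ℕ)) * G) i s * Tmat a q1 j
        = (if q1 = j then (E ^ (n - 1 - (j : ℕ)) * G) i s else 0) +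
          (if (j : ℕ) < (q1 : ℕ) then
            -(a ⟨(n - ((q1 : ℕ) - (j : ℕ))) % n, Nat.mod_lt _ (by omega)⟩ *
              (E ^ (n - 1 - (q1 : ℕ)) * G) i s) else 0) := by
      intro q1
      simp only [Tmat, of_apply]
      by_cases h1 : q1 = j
      · subst h1; simp
      · by_cases h2 : (j : ℕ) < (q1 : ℕ)
        · have hf : (⟨(n - ((q1 : ℕ) - (j : ℕ))) % n, Nat.mod_lt _ (by omega)⟩ : Fin n)
              = ⟨n - ((q1 : ℕ) - (j : ℕ)), by have := q1.isLt; omega⟩ :=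
            Fin.ext (Nat.mod_eq_of_lt (by have := q1.isLt; omega))
          rw [if_neg h1, dif_pos h2, if_neg h1, if_pos h2, hf]
          ring
        · rw [if_neg h1, dif_neg h2, if_neg h1, if_neg h2, mul_zero, add_zero]
    have hneg : ∀ q1 : Fin n,
        (if (j : ℕ) < (q1 : ℕ) then
          -(a ⟨(n - ((q1 : ℕ) - (j : ℕ))) % n, Nat.mod_lt _ (by omega)⟩ *
            (E ^ (n - 1 - (q1 : ℕ)) * G) i s) else 0)
        = -(if (j : ℕ) < (q1 : ℕ) then
            a ⟨(n - ((q1 : ℕ) - (j : ℕ))) % n, Nat.mod_lt _ (by omega)⟩ *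
              (E ^ (n - 1 - (q1 : ℕ)) * G) i s else 0) := by
      intro q1; split <;> simp
    have hbij :
        (∑ q1 : Fin n, if (j : ℕ) < (q1 : ℕ) then
          a ⟨(n - ((q1 : ℕ) - (j : ℕ))) % n, Nat.mod_lt _ (by omega)⟩ *
            (E ^ (n - 1 - (q1 : ℕ)) * G) i s else 0)
        = ∑ p1 : Fin n, (if (j : ℕ) < (p1 : ℕ) then
            a p1 * (E ^ ((p1 : ℕ) - (j : ℕ) - 1) * G) i s else 0) := by
      rw [← Finset.sum_filter, ← Finset.sum_filter]
      refine Finset.sum_nbij'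
        (fun x => (⟨(n - ((x : ℕ) - (j : ℕ))) % n, Nat.mod_lt _ (by omega)⟩ : Fin n))
        (fun x => (⟨(n - ((x : ℕ) - (j : ℕ))) % n, Nat.mod_lt _ (by omega)⟩ : Fin n))
        ?_ ?_ ?_ ?_ ?_
      · intro x hx
        simp only [Finset.mem_filter, Finset.mem_univ, true_and] at hx ⊢
        have := x.isLt
        rw [Nat.mod_eq_of_lt (by omega)]
        omega
      · intro x hx
        simp only [Finset.mem_filter, Finset.mem_univ, true_and] at hx ⊢
        have := x.isLt
        rw [Nat.mod_eq_of_lt (by omega)]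
        omega
      · intro x hx
        simp only [Finset.mem_filter, Finset.mem_univ, true_and] at hx
        have := x.isLt
        have h1 : (n - ((x : ℕ) - (j : ℕ))) % n = n - ((x : ℕ) - (j : ℕ)) :=
          Nat.mod_eq_of_lt (by omega)
        apply Fin.ext
        simp only [h1]
        rw [Nat.mod_eq_of_lt (by omega)]
        omega
      · intro x hx
        simp only [Finset.mem_filter, Finset.mem_univ, true_and] at hx
        have := x.isLt
        have h1 : (n - ((x : ℕ) - (j : ℕ))) % n = n - ((x : ℕ) - (j : ℕ)) :=
          Nat.mod_eq_of_lt (by omega)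
        apply Fin.ext
        simp only [h1]
        rw [Nat.mod_eq_of_lt (by omega)]
        omega
      · intro x hx
        simp only [Finset.mem_filter, Finset.mem_univ, true_and] at hx
        have hxlt := x.isLt
        have h1 : (n - ((x : ℕ) - (j : ℕ))) % n = n - ((x : ℕ) - (j : ℕ)) :=
          Nat.mod_eq_of_lt (by omega)
        have h2 : n - 1 - (x : ℕ) =
            ((⟨(n - ((x : ℕ) - (j : ℕ))) % n, Nat.mod_lt _ (by omega)⟩ : Fin n) : ℕ)
              - (j : ℕ) - 1 := by
          simp only [h1]
          omega
        rw [h2]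
    rw [Matrix.sub_apply, hprod, hright,
      Finset.sum_congr rfl (fun q1 _ => hsplit q1), Finset.sum_add_distrib,
      Finset.sum_ite_eq' Finset.univ j, if_pos (Finset.mem_univ j),
      Finset.sum_congr rfl (fun q1 _ => hneg q1), Finset.sum_neg_distrib, hbij]
    · simp only [Frow, of_apply]
      ring

  have hT : (Tmat a).BlockTriangular OrderDual.toDual := by
    intro p q hpq
    have hlt : (p : ℕ) < (q : ℕ) := hpq
    simp only [Tmat, of_apply]
    rw [if_neg (by intro h; subst h; omega), dif_neg (by omega)]
  have hdetT : (Tmat a).det = 1 := by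
    rw [Matrix.det_of_lowerTriangular _ hT]
    simp [Tmat]
  have hk : kronI (Tmat a) l =
      Matrix.kroneckerMap (· * ·) (Tmat a) (1 : Matrix (Fin l) (Fin l) ℝ) := by
    ext p q
    simp only [kronI, of_apply, Matrix.kroneckerMap_apply, Matrix.one_apply, mul_ite,
      mul_one, mul_zero]
  have hdet : IsUnit (kronI (Tmat a) l).det := by
    rw [hk, Matrix.det_kronecker, hdetT]
    simp
  have hrank : (Frow E G - aKron a n * Mlow E G).rank = (Frow E G).rank := by
    rw [key]
    exact Matrix.rank_mul_eq_left_of_isUnit_det _ _ hdet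
  exact ⟨key, hrank, fun h => by rw [hrank, h]⟩


end LQGPaper
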